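/- q-translational invariance: for 0 ≤ q < 1, any interval [x₁,x₂] ⊆ (-1/(1-q), +∞), and any v ∈ (-1/(1-q), +∞), μ_q([x₁,x₂] ⊕_q v) = μ_q([x₁,x₂]), where [x₁,x₂] ⊕_q v = [x₁ ⊕_q v, x₂ ⊕_q v]. -/

import Mathlib

open MeasureTheory

def qAdd (q x y : ℝ) : ℝ := x + y + (1 - q) * x * y

private lemma key_integral (c a b : ℝ) (hc : 0 < c) (ha : 0 < 1 + c * a) (hab : a ≤ b) :
    (∫ x in Set.Icc a b, (1 + c * x)⁻¹) =
      (Real.log (1 + c * b) - Real.log (1 + c * a)) / c := by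
  have hpos : ∀ x ∈ Set.uIcc a b, 0 < 1 + c * x := by
    intro x hx
    rw [Set.uIcc_of_le hab] at hx
    nlinarith [hx.1]
  have hInt : (∫ x in Set.Icc a b, (1 + c * x)⁻¹) = ∫ x in a..b, (1 + c * x)⁻¹ := by
    rw [intervalIntegral.integral_of_le hab, MeasureTheory.integral_Icc_eq_integral_Ioc]
  rw [hInt]
  have hderiv : ∀ x ∈ Set.uIcc a b,
      HasDerivAt (fun y => Real.log (1 + c * y) / c) (1 + c * x)⁻¹ x := by
    intro x hx
    have h1 : HasDerivAt (fun y : ℝ => 1 + c * y) c x := by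
      simpa using ((hasDerivAt_id x).const_mul c).const_add 1
    have h2 := (Real.hasDerivAt_log (ne_of_gt (hpos x hx))).comp x h1
    have h3 := h2.div_const c
    rw [mul_div_assoc, div_self (ne_of_gt hc), mul_one] at h3
    exact h3
  have hcont : ContinuousOn (fun x => (1 + c * x)⁻¹) (Set.uIcc a b) := by
    apply ContinuousOn.inv₀ (by fun_prop)
    intro x hx; exact ne_of_gt (hpos x hx)
  rw [intervalIntegral.integral_eq_sub_of_hasDerivAt hderiv
    (hcont.intervalIntegrable)]
  ring

theorem qMeasure_translation_invariant (q x₁ x₂ v : ℝ) (hq0 : 0 ≤ q) (hq1 : q < 1)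
    (h12 : x₁ ≤ x₂) (h1 : x₁ ∈ Set.Ioi (-1 / (1 - q))) (hv : v ∈ Set.Ioi (-1 / (1 - q))) :
    (∫ x in Set.Icc (qAdd q x₁ v) (qAdd q x₂ v), (1 + (1 - q) * x)⁻¹) =
      (∫ x in Set.Icc x₁ x₂, (1 + (1 - q) * x)⁻¹) := by
  set c := 1 - q with hcdef
  have hc : 0 < c := by linarith
  simp only [Set.mem_Ioi] at h1 hv
  have hpos : ∀ x : ℝ, -1 / c < x → 0 < 1 + c * x := by
    intro x hx
    have : -1 / c * c < x * c := by exact mul_lt_mul_of_pos_right hx hc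
    rw [div_mul_cancel₀ _ (ne_of_gt hc)] at this
    nlinarith
  have h1p : 0 < 1 + c * x₁ := hpos _ h1
  have h2p : 0 < 1 + c * x₂ := hpos _ (lt_of_lt_of_le h1 h12)
  have hvp : 0 < 1 + c * v := hpos _ hv
  have hmul : ∀ x : ℝ, 1 + c * qAdd q x v = (1 + c * x) * (1 + c * v) := by
    intro x; simp only [qAdd, hcdef]; ring
  have h1p' : 0 < 1 + c * qAdd q x₁ v := by rw [hmul]; positivity
  have hab' : qAdd q x₁ v ≤ qAdd q x₂ v := by
    have : qAdd q x₂ v - qAdd q x₁ v = (x₂ - x₁) * (1 + c * v) := by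
      simp only [qAdd, hcdef]; ring
    nlinarith
  rw [key_integral c _ _ hc h1p' hab', key_integral c _ _ hc h1p h12,
    hmul, hmul, Real.log_mul (ne_of_gt h2p) (ne_of_gt hvp),
    Real.log_mul (ne_of_gt h1p) (ne_of_gt hvp)]
  ring
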